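/- Let E ⊂ ℝ^d be compact, let ν be a probability measure on E, and let F, G ∈ L¹(ν) be strictly positive bounded measurable functions on E. Then: W₁(Ψ_G(ν), Ψ_F(ν)) ≤ diam(E) · ‖G/ν(G) − F/ν(F)‖_{L¹(ν)}. Consequently, if {F_n} ⊂ L¹(ν) are strictly positive bounded measurable functions converging to G in L¹(ν) (with ν(F_n) → ν(G) > 0), then W₁(Ψ_{F_n}(ν), Ψ_G(ν)) → 0, i.e., F ↦ Ψ_F(ν) is continuous from L¹(ν) to the 1-Wasserstein space over E. -/

import Mathlib

open MeasureTheory Filter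
open Set
open scoped NNReal ENNReal

noncomputable section

/-- ℓ¹ distance on `ℝ^d`. -/
def l1dist {d : ℕ} (x y : Fin d → ℝ) : ℝ := ∑ i, |x i - y i|

/-- The set of couplings of two measures. -/
def couplings {α : Type*} [MeasurableSpace α] (μ ν : Measure α) : Set (Measure (α × α)) :=
  {π | IsProbabilityMeasure π ∧ π.map Prod.fst = μ ∧ π.map Prod.snd = ν}

/-- Optimal transport cost with ground cost `c`. -/
def Wcost {α : Type*} [MeasurableSpace α] (c : α → α → ℝ) (μ ν : Measure α) : ℝ :=
  sInf ((fun π : Measure (α × α) => ∫ p, c p.1 p.2 ∂π) '' couplings μ ν)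

/-- 1-Wasserstein distance on `ℝ^d` with ℓ¹ ground cost. -/
def W1 {d : ℕ} (μ ν : Measure (Fin d → ℝ)) : ℝ := Wcost l1dist μ ν

/-- Boltzmann–Gibbs transformation `Ψ_g(ν)(dx) = g(x) ν(dx) / ν(g)`. -/
def BG {d : ℕ} (g : (Fin d → ℝ) → ℝ) (ν : Measure (Fin d → ℝ)) : Measure (Fin d → ℝ) :=
  ν.withDensity (fun x => ENNReal.ofReal (g x / ∫ y, g y ∂ν))

/-- Real-valued Kullback–Leibler divergence `∫ log(dμ/dν) dμ`
(the generalized entropy of the paper is `H_ν(μ) = -KL μ ν`). -/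
def KL {α : Type*} [MeasurableSpace α] (μ ν : Measure α) : ℝ :=
  ∫ x, Real.log ((μ.rnDeriv ν x).toReal) ∂μ

/-- Convolution of two measures on `ℝ^d`. -/
def mconv {d : ℕ} (μ ν : Measure (Fin d → ℝ)) : Measure (Fin d → ℝ) :=
  (μ.prod ν).map (fun p => p.1 + p.2)

/-- Empirical measure of a finite family of points. -/
def empMeasure {d N : ℕ} (x : Fin N → (Fin d → ℝ)) : Measure (Fin d → ℝ) :=
  (N : ℝ≥0∞)⁻¹ • ∑ i, Measure.dirac (x i)

lemma l1dist_nonneg {d : ℕ} (x y : Fin d → ℝ) : 0 ≤ l1dist x y :=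
  Finset.sum_nonneg fun i _ => abs_nonneg _

lemma l1dist_self {d : ℕ} (x : Fin d → ℝ) : l1dist x x = 0 := by
  simp [l1dist]

lemma l1dist_continuous {d : ℕ} :
    Continuous (fun p : (Fin d → ℝ) × (Fin d → ℝ) => l1dist p.1 p.2) := by
  unfold l1dist
  exact continuous_finset_sum _ fun i _ => (Continuous.sub (by fun_prop) (by fun_prop)).abs

lemma key {d : ℕ} (E : Set (Fin d → ℝ)) (hE : MeasurableSet E)
    (ν : Measure (Fin d → ℝ)) [IsProbabilityMeasure ν] (hνE : ν E = 1)
    (D : ℝ) (hD0 : 0 ≤ D) (hD : ∀ x ∈ E, ∀ y ∈ E, l1dist x y ≤ D)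
    (p q : (Fin d → ℝ) → ℝ) (hp : Measurable p) (hq : Measurable q)
    (hp0 : ∀ x, 0 ≤ p x) (hq0 : ∀ x, 0 ≤ q x)
    (hpi : Integrable p ν) (hqi : Integrable q ν)
    (hp1 : ∫ x, p x ∂ν = 1) (hq1 : ∫ x, q x ∂ν = 1) :
    Wcost l1dist (ν.withDensity (fun x => ENNReal.ofReal (p x)))
      (ν.withDensity (fun x => ENNReal.ofReal (q x)))
      ≤ D * ∫ x, |p x - q x| ∂ν := by
  set P : (Fin d → ℝ) → ℝ≥0∞ := fun x => ENNReal.ofReal (p x) with hP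
  set Q : (Fin d → ℝ) → ℝ≥0∞ := fun x => ENNReal.ofReal (q x) with hQ
  set H : (Fin d → ℝ) → ℝ≥0∞ := fun x => ENNReal.ofReal (min (p x) (q x)) with hH
  have hPm : Measurable P := hp.ennreal_ofReal
  have hQm : Measurable Q := hq.ennreal_ofReal
  have hHm : Measurable H := (hp.min hq).ennreal_ofReal
  have hHP : ∀ x, H x ≤ P x := fun x => ENNReal.ofReal_le_ofReal (min_le_left _ _)
  have hHQ : ∀ x, H x ≤ Q x := fun x => ENNReal.ofReal_le_ofReal (min_le_right _ _)
  have hPint : ∫⁻ x, P x ∂ν = 1 := by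
    rw [hP, ← ofReal_integral_eq_lintegral_ofReal hpi (Eventually.of_forall hp0), hp1,
      ENNReal.ofReal_one]
  have hQint : ∫⁻ x, Q x ∂ν = 1 := by
    rw [hQ, ← ofReal_integral_eq_lintegral_ofReal hqi (Eventually.of_forall hq0), hq1,
      ENNReal.ofReal_one]
  set m : ℝ≥0∞ := ∫⁻ x, H x ∂ν with hm
  have hm1 : m ≤ 1 := by rw [hm, ← hPint]; exact lintegral_mono fun x => hHP x
  have hmtop : m ≠ ⊤ := ne_top_of_le_ne_top ENNReal.one_ne_top hm1
  set s : ℝ≥0∞ := 1 - m with hs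
  have hs1 : s ≤ 1 := tsub_le_self
  have hstop : s ≠ ⊤ := ne_top_of_le_ne_top ENNReal.one_ne_top hs1
  have hsubP : ∫⁻ x, (P x - H x) ∂ν = s := by
    rw [lintegral_sub hHm (by rw [← hm]; exact hmtop) (Eventually.of_forall hHP), hPint, ← hm]
  have hsubQ : ∫⁻ x, (Q x - H x) ∂ν = s := by
    rw [lintegral_sub hHm (by rw [← hm]; exact hmtop) (Eventually.of_forall hHQ), hQint, ← hm]
  set μ1 := ν.withDensity P with hμ1
  set μ2 := ν.withDensity Q with hμ2
  set κ := ν.withDensity H with hκ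
  set μ1' := ν.withDensity (fun x => P x - H x) with hμ1'
  set μ2' := ν.withDensity (fun x => Q x - H x) with hμ2'
  have hμ1'univ : μ1' univ = s := by
    rw [hμ1', withDensity_apply _ MeasurableSet.univ, setLIntegral_univ, hsubP]
  have hμ2'univ : μ2' univ = s := by
    rw [hμ2', withDensity_apply _ MeasurableSet.univ, setLIntegral_univ, hsubQ]
  have hκuniv : κ univ = m := by
    rw [hκ, withDensity_apply _ MeasurableSet.univ, setLIntegral_univ, hm]
  haveI : IsFiniteMeasure μ1' := ⟨by rw [hμ1'univ]; exact lt_of_le_of_lt hs1 ENNReal.one_lt_top⟩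
  haveI : IsFiniteMeasure μ2' := ⟨by rw [hμ2'univ]; exact lt_of_le_of_lt hs1 ENNReal.one_lt_top⟩
  haveI : IsFiniteMeasure κ := ⟨by rw [hκuniv]; exact lt_of_le_of_lt hm1 ENNReal.one_lt_top⟩
  have hdiagm : Measurable (fun x : Fin d → ℝ => (x, x)) :=
    measurable_id.prodMk measurable_id
  set Δ := κ.map (fun x => (x, x)) with hΔ
  set ρ := μ1'.prod μ2' with hρ
  set π := Δ + s⁻¹ • ρ with hπ
  -- marginal computations
  have hsmul1 : s⁻¹ • s • μ1' = μ1' := by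
    rcases eq_or_ne s 0 with h0 | h0
    · have : μ1' = 0 := by
        rw [← Measure.measure_univ_eq_zero, hμ1'univ, h0]
      simp [this]
    · rw [smul_smul, ENNReal.inv_mul_cancel h0 hstop, one_smul]
  have hsmul2 : s⁻¹ • s • μ2' = μ2' := by
    rcases eq_or_ne s 0 with h0 | h0
    · have : μ2' = 0 := by
        rw [← Measure.measure_univ_eq_zero, hμ2'univ, h0]
      simp [this]
    · rw [smul_smul, ENNReal.inv_mul_cancel h0 hstop, one_smul]
  have hκadd1 : κ + μ1' = μ1 := by
    rw [hκ, hμ1', ← withDensity_add_left hHm (fun x => P x - H x)]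
    · congr 1
      funext x
      exact add_tsub_cancel_of_le (hHP x)
  have hκadd2 : κ + μ2' = μ2 := by
    rw [hκ, hμ2', ← withDensity_add_left hHm (fun x => Q x - H x)]
    · congr 1
      funext x
      exact add_tsub_cancel_of_le (hHQ x)
  have hfst : π.map Prod.fst = μ1 := by
    rw [hπ, Measure.map_add _ _ measurable_fst, Measure.map_smul,
      Measure.map_fst_prod, hΔ, Measure.map_map measurable_fst hdiagm]
    have : (Prod.fst ∘ fun x : Fin d → ℝ => (x, x)) = id := rfl
    rw [this, Measure.map_id, hμ2'univ, hsmul1, hκadd1]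
  have hsnd : π.map Prod.snd = μ2 := by
    rw [hπ, Measure.map_add _ _ measurable_snd, Measure.map_smul,
      Measure.map_snd_prod, hΔ, Measure.map_map measurable_snd hdiagm]
    have : (Prod.snd ∘ fun x : Fin d → ℝ => (x, x)) = id := rfl
    rw [this, Measure.map_id, hμ1'univ, hsmul2, hκadd2]
  have hρuniv : ρ univ = s * s := by
    rw [hρ, ← Set.univ_prod_univ, Measure.prod_prod, hμ1'univ, hμ2'univ]
  have hsss : s⁻¹ * (s * s) = s := by
    rcases eq_or_ne s 0 with h0 | h0
    · simp [h0]
    · rw [← mul_assoc, ENNReal.inv_mul_cancel h0 hstop, one_mul]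
  have hπuniv : π univ = 1 := by
    rw [hπ]
    simp only [Measure.coe_add, Pi.add_apply, Measure.coe_smul, Pi.smul_apply, smul_eq_mul]
    rw [hΔ, Measure.map_apply hdiagm MeasurableSet.univ]
    simp only [Set.preimage_univ]
    rw [hκuniv, hρuniv, hsss, hs, add_tsub_cancel_of_le hm1]
  haveI hπprob : IsProbabilityMeasure π := ⟨hπuniv⟩
  -- null sets
  have hνEc : ν Eᶜ = 0 := by
    have := measure_compl hE (measure_ne_top ν E)
    rw [hνE, measure_univ] at this
    simp [this]
  have hΔnull : Δ (E ×ˢ E)ᶜ = 0 := by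
    rw [hΔ, Measure.map_apply hdiagm (hE.prod hE).compl]
    have hpre : (fun x : Fin d → ℝ => (x, x)) ⁻¹' (E ×ˢ E)ᶜ = Eᶜ := by
      ext x; simp [Set.mem_prod]
    rw [hpre, hκ]
    exact le_antisymm (le_of_le_of_eq (withDensity_absolutelyContinuous ν H hνEc ▸ le_rfl)
      rfl) zero_le
  have hμ1'null : μ1' Eᶜ = 0 := withDensity_absolutelyContinuous ν _ hνEc
  have hμ2'null : μ2' Eᶜ = 0 := withDensity_absolutelyContinuous ν _ hνEc
  have hρnull : ρ (E ×ˢ E)ᶜ = 0 := by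
    have hsub : (E ×ˢ E)ᶜ ⊆ (Eᶜ ×ˢ univ) ∪ (univ ×ˢ Eᶜ) := by
      intro z hz
      simp only [Set.mem_compl_iff, Set.mem_prod, not_and] at hz
      by_cases h1 : z.1 ∈ E
      · exact Or.inr ⟨trivial, hz h1⟩
      · exact Or.inl ⟨h1, trivial⟩
    refine le_antisymm (le_trans (measure_mono hsub) ?_) zero_le
    refine le_trans (measure_union_le _ _) ?_
    rw [hρ, Measure.prod_prod, Measure.prod_prod, hμ1'null, hμ2'null]
    simp
  have hπnull : π (E ×ˢ E)ᶜ = 0 := by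
    rw [hπ]
    simp only [Measure.coe_add, Pi.add_apply, Measure.coe_smul, Pi.smul_apply, smul_eq_mul]
    rw [hΔnull, hρnull]
    simp
  -- cost function
  set c : (Fin d → ℝ) × (Fin d → ℝ) → ℝ := fun pr => l1dist pr.1 pr.2 with hc
  have hcm : Continuous c := l1dist_continuous
  have hc0 : ∀ pr, 0 ≤ c pr := fun pr => l1dist_nonneg _ _
  have hboundπ : ∀ᵐ pr ∂π, ‖c pr‖ ≤ D := by
    refine (ae_iff.2 ?_)
    refine measure_mono_null (fun z hz => ?_) hπnull
    simp only [Set.mem_setOf_eq, not_le] at hz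
    intro hzE
    rw [Real.norm_eq_abs, abs_of_nonneg (hc0 z)] at hz
    exact absurd (hD z.1 hzE.1 z.2 hzE.2) (not_le.2 hz)
  have hboundρ : ∀ᵐ pr ∂ρ, ‖c pr‖ ≤ D := by
    refine (ae_iff.2 ?_)
    refine measure_mono_null (fun z hz => ?_) hρnull
    simp only [Set.mem_setOf_eq, not_le] at hz
    intro hzE
    rw [Real.norm_eq_abs, abs_of_nonneg (hc0 z)] at hz
    exact absurd (hD z.1 hzE.1 z.2 hzE.2) (not_le.2 hz)
  have hintπ : Integrable c π :=
    Integrable.mono' (integrable_const D) hcm.aestronglyMeasurable hboundπ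
  have hintρ : Integrable c ρ :=
    Integrable.mono' (integrable_const D) hcm.aestronglyMeasurable hboundρ
  have hintΔ : Integrable c Δ := by
    rw [hπ] at hintπ
    exact (integrable_add_measure.1 hintπ).1
  -- integral computation
  have hintΔ0 : ∫ pr, c pr ∂Δ = 0 := by
    rw [hΔ, integral_map hdiagm.aemeasurable hcm.aestronglyMeasurable]
    simp [hc, l1dist_self]
  have hρle : ∫ pr, c pr ∂ρ ≤ D * (s * s).toReal := by
    have := integral_mono_ae hintρ (integrable_const D)
      (by filter_upwards [hboundρ] with z hz using
        (le_trans (le_abs_self _) (by rwa [Real.norm_eq_abs] at hz)))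
    rwa [integral_const, measureReal_def, hρuniv, smul_eq_mul, mul_comm] at this
  have hcost : ∫ pr, c pr ∂π ≤ D * s.toReal := by
    rw [hπ, integral_add_measure hintΔ (by rw [hπ] at hintπ; exact (integrable_add_measure.1 hintπ).2),
      hintΔ0, zero_add, integral_smul_measure]
    rcases eq_or_ne s 0 with h0 | h0
    · have : ρ = 0 := by
        rw [← Measure.measure_univ_eq_zero, hρuniv, h0, mul_zero]
      simp [this, h0, mul_nonneg hD0 ENNReal.toReal_nonneg]
    · have hstoReal : s⁻¹.toReal = (s.toReal)⁻¹ := by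
        rw [ENNReal.toReal_inv]
      calc s⁻¹.toReal • ∫ pr, c pr ∂ρ ≤ s⁻¹.toReal * (D * (s * s).toReal) := by
            rw [smul_eq_mul]
            exact mul_le_mul_of_nonneg_left hρle ENNReal.toReal_nonneg
        _ = D * s.toReal := by
            rw [hstoReal, ENNReal.toReal_mul]
            have hst : s.toReal ≠ 0 := by
              simp [ENNReal.toReal_eq_zero_iff, h0, hstop]
            field_simp
  -- s.toReal ≤ ∫ |p - q|
  have habsint : Integrable (fun x => |p x - q x|) ν := (hpi.sub hqi).abs
  have hsle : s.toReal ≤ ∫ x, |p x - q x| ∂ν := by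
    have hmono : ∀ x, P x - H x ≤ ENNReal.ofReal (|p x - q x|) := by
      intro x
      rw [hP, hH]
      rw [← ENNReal.ofReal_sub _ (le_min (hp0 x) (hq0 x))]
      apply ENNReal.ofReal_le_ofReal
      rcases le_total (p x) (q x) with h | h
      · rw [min_eq_left h]; simp [abs_nonneg]
      · rw [min_eq_right h, abs_of_nonneg (sub_nonneg.2 h)]
    have : s ≤ ENNReal.ofReal (∫ x, |p x - q x| ∂ν) := by
      rw [← hsubP, ofReal_integral_eq_lintegral_ofReal habsint
        (Eventually.of_forall fun x => abs_nonneg _)]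
      exact lintegral_mono hmono
    calc s.toReal ≤ (ENNReal.ofReal (∫ x, |p x - q x| ∂ν)).toReal :=
          ENNReal.toReal_mono ENNReal.ofReal_ne_top this
      _ = ∫ x, |p x - q x| ∂ν := ENNReal.toReal_ofReal (integral_nonneg fun x => abs_nonneg _)
  -- conclude
  have hmem : (∫ pr, c pr ∂π) ∈
      ((fun π : Measure ((Fin d → ℝ) × (Fin d → ℝ)) => ∫ pr, l1dist pr.1 pr.2 ∂π) ''
        couplings μ1 μ2) := ⟨π, ⟨hπprob, hfst, hsnd⟩, rfl⟩
  have hbdd : BddBelow ((fun π : Measure ((Fin d → ℝ) × (Fin d → ℝ)) =>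
      ∫ pr, l1dist pr.1 pr.2 ∂π) '' couplings μ1 μ2) := by
    refine ⟨0, fun r hr => ?_⟩
    obtain ⟨π', _, rfl⟩ := hr
    exact integral_nonneg fun pr => l1dist_nonneg _ _
  calc Wcost l1dist μ1 μ2 ≤ ∫ pr, c pr ∂π := csInf_le hbdd hmem
    _ ≤ D * s.toReal := hcost
    _ ≤ D * ∫ x, |p x - q x| ∂ν := mul_le_mul_of_nonneg_left hsle hD0

lemma l1dist_self' {d : ℕ} (x : Fin d → ℝ) : l1dist x x = 0 := by simp [l1dist]
lemma l1dist_nonneg' {d : ℕ} (x y : Fin d → ℝ) : 0 ≤ l1dist x y :=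
  Finset.sum_nonneg fun _ _ => abs_nonneg _

lemma integrable_of_bdd {d : ℕ} {ν : Measure (Fin d → ℝ)} [IsProbabilityMeasure ν]
    {f : (Fin d → ℝ) → ℝ} (hf : Measurable f) (h0 : ∀ x, 0 ≤ f x)
    (hb : ∃ C, ∀ x, f x ≤ C) : Integrable f ν := by
  obtain ⟨C, hC⟩ := hb
  refine Integrable.mono' (integrable_const C) hf.aestronglyMeasurable ?_
  filter_upwards with x
  rw [Real.norm_eq_abs, abs_of_nonneg (h0 x)]
  exact hC x

lemma integral_pos_of_pos {d : ℕ} {ν : Measure (Fin d → ℝ)} [IsProbabilityMeasure ν]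
    {f : (Fin d → ℝ) → ℝ} (hpos : ∀ x, 0 < f x) (hi : Integrable f ν) :
    0 < ∫ x, f x ∂ν := by
  rw [integral_pos_iff_support_of_nonneg (fun x => (hpos x).le) hi]
  have : Function.support f = univ := by
    ext x; simp [Function.support, (hpos x).ne']
  rw [this, measure_univ]
  exact zero_lt_one

lemma W1_nonneg {d : ℕ} (μ ν : Measure (Fin d → ℝ)) : 0 ≤ W1 μ ν := by
  apply Real.sInf_nonneg
  rintro r ⟨π, _, rfl⟩
  exact integral_nonneg fun pr => l1dist_nonneg' _ _

/-- `W₁(Ψ_G(ν), Ψ_F(ν)) ≤ diam(E) ‖G/ν(G) − F/ν(F)‖_{L¹(ν)}`, and consequently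
`F ↦ Ψ_F(ν)` is continuous from `L¹(ν)` to the 1-Wasserstein space over a compact `E`.
Here `D` is the ℓ¹-diameter of `E`. -/
theorem statement13 {d : ℕ} (E : Set (Fin d → ℝ)) (hEc : IsCompact E)
    (ν : Measure (Fin d → ℝ)) [IsProbabilityMeasure ν] (hνE : ν E = 1)
    (D : ℝ) (hD : ∀ x ∈ E, ∀ y ∈ E, l1dist x y ≤ D)
    (F G : (Fin d → ℝ) → ℝ) (hFmeas : Measurable F) (hGmeas : Measurable G)
    (hFpos : ∀ x, 0 < F x) (hGpos : ∀ x, 0 < G x)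
    (hFbdd : ∃ C, ∀ x, F x ≤ C) (hGbdd : ∃ C, ∀ x, G x ≤ C)
    (Fn : ℕ → (Fin d → ℝ) → ℝ) (hFnmeas : ∀ n, Measurable (Fn n))
    (hFnpos : ∀ n x, 0 < Fn n x) (hFnbdd : ∀ n, ∃ C, ∀ x, Fn n x ≤ C)
    (hFnL1 : Tendsto (fun n => ∫ x, |Fn n x - G x| ∂ν) atTop (nhds 0))
    (hFnint : Tendsto (fun n => ∫ x, Fn n x ∂ν) atTop (nhds (∫ x, G x ∂ν)))
    (hGint : 0 < ∫ x, G x ∂ν) :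
    W1 (BG G ν) (BG F ν)
        ≤ D * ∫ x, |G x / (∫ y, G y ∂ν) - F x / (∫ y, F y ∂ν)| ∂ν
      ∧ Tendsto (fun n => W1 (BG (Fn n) ν) (BG G ν)) atTop (nhds 0) := by
  have hEm : MeasurableSet E := hEc.isClosed.measurableSet
  have hEne : E.Nonempty := by
    rcases eq_empty_or_nonempty E with h | h
    · rw [h] at hνE; simp at hνE
    · exact h
  obtain ⟨x0, hx0⟩ := hEne
  have hD0 : 0 ≤ D := by
    have := hD x0 hx0 x0 hx0
    rwa [l1dist_self'] at this
  have hGi : Integrable G ν := integrable_of_bdd hGmeas (fun x => (hGpos x).le) hGbdd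
  have hFi : Integrable F ν := integrable_of_bdd hFmeas (fun x => (hFpos x).le) hFbdd
  have hFni : ∀ n, Integrable (Fn n) ν :=
    fun n => integrable_of_bdd (hFnmeas n) (fun x => (hFnpos n x).le) (hFnbdd n)
  set a : ℝ := ∫ x, G x ∂ν with ha
  have haa : 0 < a := hGint
  set b : ℝ := ∫ x, F x ∂ν with hb
  have hbb : 0 < b := integral_pos_of_pos hFpos hFi
  have han : ∀ n, 0 < ∫ x, Fn n x ∂ν := fun n => integral_pos_of_pos (hFnpos n) (hFni n)
  -- normalized-one helper
  have hnorm : ∀ (f : (Fin d → ℝ) → ℝ), Integrable f ν → (0 < ∫ x, f x ∂ν) →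
      ∫ x, f x / (∫ y, f y ∂ν) ∂ν = 1 := by
    intro f hfi hfpos
    rw [integral_div]
    exact div_self hfpos.ne'
  constructor
  · exact key E hEm ν hνE D hD0 hD
      (fun x => G x / a) (fun x => F x / b)
      (hGmeas.div_const a) (hFmeas.div_const b)
      (fun x => div_nonneg (hGpos x).le haa.le) (fun x => div_nonneg (hFpos x).le hbb.le)
      (hGi.div_const a) (hFi.div_const b)
      (hnorm G hGi haa) (hnorm F hFi hbb)
  · set In : ℕ → ℝ := fun n =>
      ∫ x, |Fn n x / (∫ y, Fn n y ∂ν) - G x / a| ∂ν with hIn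
    have hWle : ∀ n, W1 (BG (Fn n) ν) (BG G ν) ≤ D * In n := by
      intro n
      exact key E hEm ν hνE D hD0 hD
        (fun x => Fn n x / (∫ y, Fn n y ∂ν)) (fun x => G x / a)
        ((hFnmeas n).div_const _) (hGmeas.div_const a)
        (fun x => div_nonneg (hFnpos n x).le (han n).le)
        (fun x => div_nonneg (hGpos x).le haa.le)
        ((hFni n).div_const _) (hGi.div_const a)
        (hnorm (Fn n) (hFni n) (han n)) (hnorm G hGi haa)
    -- In → 0
    have hIn0 : Tendsto In atTop (nhds 0) := by
      set B : ℕ → ℝ := fun n =>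
        (∫ x, |Fn n x - G x| ∂ν) / (∫ y, Fn n y ∂ν) + |1 / (∫ y, Fn n y ∂ν) - 1 / a| * a
        with hB
      have hInB : ∀ n, In n ≤ B n := by
        intro n
        set an : ℝ := ∫ y, Fn n y ∂ν with han'
        have hptw : ∀ x, |Fn n x / an - G x / a| ≤
            |Fn n x - G x| / an + G x * |1 / an - 1 / a| := by
          intro x
          have heq : Fn n x / an - G x / a
              = (Fn n x - G x) / an + G x * (1 / an - 1 / a) := by
            field_simp
            ring
          rw [heq]
          refine le_trans (abs_add_le _ _) ?_
          rw [abs_div, abs_of_pos (han n), abs_mul, abs_of_pos (hGpos x)]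
        have habint : Integrable (fun x => |Fn n x - G x|) ν := by
          simpa using ((hFni n).sub hGi).abs
        have hint1 : Integrable (fun x => |Fn n x - G x| / an + G x * |1 / an - 1 / a|) ν :=
          (habint.div_const an).add (hGi.mul_const _)
        have hint0 : Integrable (fun x => |Fn n x / an - G x / a|) ν :=
          (((hFni n).div_const an).sub (hGi.div_const a)).abs
        calc In n ≤ ∫ x, (|Fn n x - G x| / an + G x * |1 / an - 1 / a|) ∂ν :=
              integral_mono hint0 hint1 hptw
          _ = B n := by
              rw [integral_add (habint.div_const an) (hGi.mul_const _),
                integral_div, integral_mul_const]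
              rw [hB, ← ha]
              show _ = _ / an + |1 / an - 1 / a| * a
              ring_nf
      have hIn_nonneg : ∀ n, 0 ≤ In n := fun n => integral_nonneg fun x => abs_nonneg _
      have hB0 : Tendsto B atTop (nhds 0) := by
        have h1 : Tendsto (fun n => (∫ x, |Fn n x - G x| ∂ν) / (∫ y, Fn n y ∂ν)) atTop
            (nhds (0 / a)) := hFnL1.div hFnint haa.ne'
        have h2 : Tendsto (fun n => |1 / (∫ y, Fn n y ∂ν) - 1 / a| * a) atTop
            (nhds (|1 / a - 1 / a| * a)) := by
          refine Tendsto.mul ?_ tendsto_const_nhds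
          exact (((tendsto_const_nhds.div hFnint haa.ne').sub tendsto_const_nhds)).abs
        have := h1.add h2
        rw [hB]
        simpa [one_div] using this
      exact squeeze_zero hIn_nonneg hInB hB0
    have hDIn : Tendsto (fun n => D * In n) atTop (nhds 0) := by
      simpa using hIn0.const_mul D
    exact squeeze_zero (fun n => W1_nonneg _ _) hWle hDIn
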